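/- arXiv:2111.07375 — 5 statements merged into one kernel-verified Lean document; each statement's English description precedes it below -/
import Mathlib

section
/- The set of badly approximable real numbers in (0,1) has Lebesgue measure zero. -/
open MeasureTheory Metric Set Filter
open scoped Topology ENNReal

-- finitely many rationals with bounded denominator near x
lemma finite_bdd_den (x : ℝ) (n : ℕ) : {q : ℚ | q.den ≤ n ∧ |x - (q:ℝ)| < 1}.Finite := by
  have hinj : Set.InjOn (fun q : ℚ => (q.num, q.den)) {q : ℚ | q.den ≤ n ∧ |x - (q:ℝ)| < 1} := by
    intro a _ b _ h
    simp only [Prod.mk.injEq] at h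
    exact Rat.ext h.1 h.2
  apply Set.Finite.of_finite_image ?_ hinj
  apply Set.Finite.subset ((Set.finite_Icc (-(⌈(|x|+1)*n⌉)) ⌈(|x|+1)*n⌉).prod (Set.finite_Icc 0 n))
  rintro ⟨a, b⟩ ⟨q, ⟨hd, hq⟩, heq⟩
  simp only [Prod.mk.injEq] at heq
  obtain ⟨rfl, rfl⟩ := heq
  constructor
  · have h1 : |(q:ℝ)| ≤ |x| + 1 := by
      have := abs_sub_abs_le_abs_sub (q:ℝ) x
      rw [abs_sub_comm] at hq
      linarith
    have h2 : |(q.num : ℝ)| ≤ (|x|+1) * n := by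
      have : (q.num : ℝ) = (q:ℝ) * q.den := by
        rw [Rat.cast_def]
        field_simp
      rw [this, abs_mul, abs_of_nonneg (by positivity : (0:ℝ) ≤ (q.den:ℝ))]
      have : (q.den : ℝ) ≤ n := by exact_mod_cast hd
      have h0 : (0:ℝ) ≤ |x| + 1 := by positivity
      calc |(q:ℝ)| * (q.den:ℝ) ≤ (|x|+1) * (q.den:ℝ) := by
            apply mul_le_mul_of_nonneg_right h1 (by positivity)
        _ ≤ (|x|+1) * n := by apply mul_le_mul_of_nonneg_left this h0
    have h3 : |(q.num : ℝ)| ≤ (⌈(|x|+1)*n⌉ : ℝ) := h2.trans (Int.le_ceil _)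
    rw [abs_le] at h3
    constructor
    · exact_mod_cast h3.1
    · exact_mod_cast h3.2
  · exact ⟨Nat.zero_le _, hd⟩

lemma bad_null (δ : ℝ) (hδ : 0 < δ) :
    MeasureTheory.volume {θ : ℝ | ∀ m : ℕ, 1 ≤ m → ∀ l : ℤ, δ / m < |(m : ℝ) * θ - (l : ℝ)|} = 0 := by
  set μ := (MeasureTheory.volume : Measure ℝ)
  set B := {θ : ℝ | ∀ m : ℕ, 1 ≤ m → ∀ l : ℤ, δ / m < |(m : ℝ) * θ - (l : ℝ)|} with hBdef
  by_contra hB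
  set t := toMeasurable μ B with htdef
  have htm : MeasurableSet t := measurableSet_toMeasurable _ _
  have hBt : B ⊆ t := subset_toMeasurable _ _
  have hd := Besicovitch.ae_tendsto_measure_inter_div_of_measurableSet μ htm
  -- pick a point of B which is a density point of t
  obtain ⟨x, hxB, hx⟩ : ∃ x ∈ B, Tendsto (fun r => μ (t ∩ closedBall x r) / μ (closedBall x r))
      (𝓝[>] 0) (𝓝 (t.indicator 1 x)) := by
    by_contra h
    push_neg at h
    exact hB (measure_mono_null (fun y hy => h y hy) (ae_iff.mp hd))
  rw [Set.indicator_of_mem (hBt hxB) 1] at hx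
  -- x is irrational
  have hirr : Irrational x := by
    rw [irrational_iff_ne_rational]
    intro a b _ hb
    rcases eq_or_ne b 0 with rfl | hb0
    · have h2 := hxB 1 le_rfl 0
      rw [hb] at h2
      norm_num at h2
      linarith
    · have hbn : (1:ℕ) ≤ b.natAbs := Int.natAbs_pos.mpr hb0
      have hbR : ((b:ℝ)) ≠ 0 := Int.cast_ne_zero.mpr hb0
      have h3 := hxB b.natAbs hbn (if 0 ≤ b then a else -a)
      have h4 : ((b.natAbs : ℕ):ℝ) * x - ((if 0 ≤ b then a else -a : ℤ) : ℝ) = 0 := by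
        rw [hb]
        rcases le_or_gt 0 b with h | h
        · rw [if_pos h]
          have hB2 : ((b.natAbs : ℕ):ℝ) = (b:ℝ) := by
            rw [Nat.cast_natAbs]
            exact_mod_cast abs_of_nonneg h
          rw [hB2]
          field_simp
          ring
        · rw [if_neg (not_le.mpr h)]
          have hB2 : ((b.natAbs : ℕ):ℝ) = -(b:ℝ) := by
            rw [Nat.cast_natAbs]
            exact_mod_cast abs_of_neg h
          rw [hB2]
          push_cast
          field_simp
          ring
      rw [h4, abs_zero] at h3
      have h5 : 0 < δ / ((b.natAbs : ℕ) : ℝ) := by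
        have : (0:ℝ) < ((b.natAbs : ℕ) : ℝ) := by exact_mod_cast hbn
        positivity
      linarith
  -- infinitely many good approximations with large denominator
  have key : ∀ n : ℕ, ∃ q : ℚ, n < q.den ∧ |x - (q:ℝ)| < 1 / (q.den:ℝ)^2 := by
    intro n
    have hinf := Real.infinite_rat_abs_sub_lt_one_div_den_sq_of_irrational hirr
    obtain ⟨q, hq1, hq2⟩ := (hinf.diff (finite_bdd_den x n)).nonempty
    simp only [Set.mem_setOf_eq, Set.mem_diff] at hq1 hq2 ⊢
    refine ⟨q, ?_, hq1⟩
    by_contra hle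
    push_neg at hle
    apply hq2
    refine ⟨hle, lt_of_lt_of_le hq1 ?_⟩
    have hd1 : (1:ℝ) ≤ (q.den:ℝ) := by exact_mod_cast q.pos
    rw [div_le_one (by positivity)]
    nlinarith
  choose q hq1 hq2 using key
  set c : ℝ := δ / (1 + δ) with hc
  have hc1 : c < 1 := by
    rw [hc, div_lt_one (by linarith)]
    linarith
  have hc0 : 0 < c := by positivity
  set r : ℕ → ℝ := fun n => (1 + δ) / ((q n).den : ℝ) ^ 2 with hr
  have hden : ∀ n, (0:ℝ) < ((q n).den : ℝ) := fun n => by exact_mod_cast (q n).pos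
  have hrpos : ∀ n, 0 < r n := fun n => div_pos (by linarith) (by positivity)
  have hbound : ∀ n, μ (t ∩ closedBall x (r n)) / μ (closedBall x (r n))
      ≤ ENNReal.ofReal (1 - c) := by
    intro n
    have hd0 : (0:ℝ) < ((q n).den : ℝ) := hden n
    set J := ball ((q n : ℝ)) (δ / ((q n).den : ℝ) ^ 2) with hJdef
    have hJB : B ∩ J = ∅ := by
      ext y
      simp only [mem_inter_iff, mem_ball, mem_empty_iff_false, iff_false, not_and]
      intro hyB hyJ0
      have hyJ : |y - ((q n : ℚ) : ℝ)| < δ / ((q n).den : ℝ) ^ 2 := by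
        simpa [hJdef, Real.dist_eq] using hyJ0
      have h1 := hyB (q n).den (q n).pos (q n).num
      have h2 : ((q n).den : ℝ) * y - ((q n).num : ℝ)
          = ((q n).den : ℝ) * (y - ((q n : ℚ) : ℝ)) := by
        rw [Rat.cast_def]
        field_simp
      rw [h2, abs_mul, abs_of_pos hd0] at h1
      have h3 : ((q n).den : ℝ) * |y - ((q n : ℚ) : ℝ)|
          < ((q n).den : ℝ) * (δ / ((q n).den : ℝ) ^ 2) :=
        mul_lt_mul_of_pos_left hyJ hd0
      have h4 : ((q n).den : ℝ) * (δ / ((q n).den : ℝ) ^ 2) = δ / ((q n).den : ℝ) := by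
        field_simp
      rw [h4] at h3
      linarith
    have hJsub : J ⊆ closedBall x (r n) := by
      intro y hy
      rw [mem_closedBall, Real.dist_eq]
      rw [mem_ball, Real.dist_eq] at hy
      have h5 := hq2 n
      have h6 : |y - x| ≤ |y - ((q n : ℚ) : ℝ)| + |x - ((q n : ℚ) : ℝ)| := by
        rw [abs_sub_comm x _]
        exact abs_sub_le y _ x
      have h7 : r n = δ / ((q n).den : ℝ) ^ 2 + 1 / ((q n).den : ℝ) ^ 2 := by
        rw [hr]
        field_simp
        ring
      linarith
    have htJ : μ (t ∩ J) = 0 := by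
      rw [htdef, Measure.measure_toMeasurable_inter_of_sFinite measurableSet_ball, hJB]
      exact measure_empty
    have hsplit : t ∩ closedBall x (r n) ⊆ (closedBall x (r n) \ J) ∪ (t ∩ J) := by
      rintro y ⟨hyt, hycb⟩
      by_cases hyJ : y ∈ J
      · exact Or.inr ⟨hyt, hyJ⟩
      · exact Or.inl ⟨hycb, hyJ⟩
    have h6 : μ (t ∩ closedBall x (r n)) ≤ μ (closedBall x (r n) \ J) := by
      calc μ (t ∩ closedBall x (r n)) ≤ μ ((closedBall x (r n) \ J) ∪ (t ∩ J)) :=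
            measure_mono hsplit
        _ ≤ μ (closedBall x (r n) \ J) + μ (t ∩ J) := measure_union_le _ _
        _ = μ (closedBall x (r n) \ J) := by rw [htJ, add_zero]
    have h7 : μ (closedBall x (r n) \ J)
        = ENNReal.ofReal (2 * r n - 2 * (δ / ((q n).den : ℝ) ^ 2)) := by
      rw [measure_diff hJsub measurableSet_ball.nullMeasurableSet measure_ball_lt_top.ne,
        Real.volume_closedBall, Real.volume_ball,
        ← ENNReal.ofReal_sub _ (by positivity)]
    have h8 : (1 - c) * (2 * r n) = 2 * r n - 2 * (δ / ((q n).den : ℝ) ^ 2) := by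
      rw [hc, hr]
      field_simp
    apply ENNReal.div_le_of_le_mul
    rw [Real.volume_closedBall]
    calc μ (t ∩ closedBall x (r n))
        ≤ ENNReal.ofReal (2 * r n - 2 * (δ / ((q n).den : ℝ) ^ 2)) := h6.trans_eq h7
      _ = ENNReal.ofReal ((1 - c) * (2 * r n)) := by rw [h8]
      _ = ENNReal.ofReal (1 - c) * ENNReal.ofReal (2 * r n) :=
          ENNReal.ofReal_mul (by linarith)
  have hr0 : Tendsto r atTop (𝓝[>] 0) := by
    apply tendsto_nhdsWithin_of_tendsto_nhds_of_eventually_within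
    · apply Tendsto.div_atTop (tendsto_const_nhds)
      apply tendsto_atTop_mono (fun n => ?_) tendsto_natCast_atTop_atTop
      have h9 : n + 1 ≤ (q n).den := hq1 n
      have h10 : ((q n).den : ℝ) ≥ 1 := by exact_mod_cast (q n).pos
      have h11 : ((n:ℝ) + 1) ≤ ((q n).den : ℝ) := by exact_mod_cast h9
      nlinarith
    · exact Eventually.of_forall (fun n => hrpos n)
  have hlim := hx.comp hr0
  have hle : (1 : ℝ≥0∞) ≤ ENNReal.ofReal (1 - c) :=
    le_of_tendsto hlim (Eventually.of_forall hbound)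
  have : ENNReal.ofReal (1 - c) < 1 := by
    apply ENNReal.ofReal_lt_one.mpr
    linarith
  exact absurd hle (not_le.mpr this)


theorem stmt_8 :
    MeasureTheory.volume {θ : ℝ | θ ∈ Set.Ioo (0 : ℝ) 1 ∧
      ∃ δ : ℝ, 0 < δ ∧ ∀ m : ℕ, 1 ≤ m → ∀ l : ℤ, δ / m < |(m : ℝ) * θ - (l : ℝ)|} = 0 := by
  apply measure_mono_null (t := ⋃ k : ℕ,
    {θ : ℝ | ∀ m : ℕ, 1 ≤ m → ∀ l : ℤ, (1 / ((k:ℝ) + 1)) / m < |(m : ℝ) * θ - (l : ℝ)|})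
  · rintro θ ⟨_, δ, hδ, hθ⟩
    obtain ⟨k, hk⟩ := exists_nat_gt (1 / δ)
    refine mem_iUnion.mpr ⟨k, fun m hm l => ?_⟩
    refine lt_of_le_of_lt ?_ (hθ m hm l)
    have hm0 : (0:ℝ) < m := by exact_mod_cast hm
    have h1 : 1 / ((k:ℝ) + 1) ≤ δ := by
      rw [div_le_iff₀ (by positivity)]
      rw [div_lt_iff₀ hδ] at hk
      nlinarith
    gcongr
  · exact measure_iUnion_null fun k => bad_null _ (by positivity)
end

section
/- For almost every z on the unit circle (with respect to Haar/arc-length measure), there exists N ∈ ℕ such that for all n ∈ ℕ, n⁴/(N·2^{n-1}) < min_{1 ≤ j ≤ n²} |1 - z^j|. -/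
open MeasureTheory

open Filter Complex Pointwise ENNReal NNReal

noncomputable instance : MeasurableSpace Circle := borel Circle
instance : BorelSpace Circle := ⟨rfl⟩

lemma myexp_pow (x : ℝ) (j : ℕ) : (Circle.exp x) ^ j = Circle.exp (j * x) := by
  induction j with
  | zero => simp
  | succ n ih => rw [pow_succ, ih, ← Circle.exp_add]; congr 1; push_cast; ring

lemma mypow_surj {j : ℕ} (hj : 1 ≤ j) : Function.Surjective (fun z : Circle => z ^ j) := by
  intro w
  refine ⟨Circle.exp (Complex.arg w / j), ?_⟩
  simp only [myexp_pow]
  rw [mul_div_cancel₀ _ (Nat.cast_ne_zero.mpr (by omega) : (j:ℝ) ≠ 0), Circle.exp_arg]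

lemma mypow_preserving (τ : Measure Circle) [τ.IsHaarMeasure] {j : ℕ} (hj : 1 ≤ j) :
    MeasurePreserving (fun z : Circle => z ^ j) τ τ :=
  MonoidHom.measurePreserving (μ := τ) (ν := τ) (f := powMonoidHom j) (continuous_pow j) (mypow_surj hj) rfl

lemma myabs_exp_sub_one (θ : ℝ) :
    ‖Complex.exp (θ * Complex.I) - 1‖ = 2 * |Real.sin (θ / 2)| := by
  have h : Complex.exp (θ * Complex.I) - 1
      = Complex.ofReal (Real.cos θ - 1) + Complex.ofReal (Real.sin θ) * Complex.I := by
    rw [Complex.exp_mul_I]; push_cast; ring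
  rw [h, Complex.norm_add_mul_I]
  have h2 : (Real.cos θ - 1) ^ 2 + Real.sin θ ^ 2 = (2 * |Real.sin (θ/2)|) ^ 2 := by
    have h3 := Real.abs_sin_half θ
    have h4 : Real.sin θ ^ 2 = 1 - Real.cos θ ^ 2 := by
      have := Real.sin_sq_add_cos_sq θ; linarith
    have h5 : (0:ℝ) ≤ (1 - Real.cos θ) / 2 := by nlinarith [Real.cos_le_one θ]
    rw [mul_pow, h3, Real.sq_sqrt h5]
    nlinarith
  rw [h2, Real.sqrt_sq (by positivity)]

lemma mysin_ge {m : ℕ} (h2 : 2 ≤ m) {y : ℝ} (h1 : Real.pi / m ≤ y) (h3 : y ≤ Real.pi / 2) :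
    2 / m ≤ Real.sin y := by
  have hm : (0:ℝ) < m := by positivity
  have hy0 : 0 ≤ y := le_trans (by positivity) h1
  calc 2 / (m:ℝ) = 2 / Real.pi * (Real.pi / m) := by
        field_simp
      _ ≤ 2 / Real.pi * y := mul_le_mul_of_nonneg_left h1 (by positivity)
      _ ≤ Real.sin y := Real.mul_le_sin hy0 h3

lemma mysin_ge' {m d : ℕ} (h2 : 2 ≤ m) (hd1 : 1 ≤ d) (hdm : d < m) :
    2 / m ≤ Real.sin (Real.pi * d / m) := by
  have hm : (0:ℝ) < m := by positivity
  have hπ := Real.pi_pos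
  have hd : (1:ℝ) ≤ d := by exact_mod_cast hd1
  have hdm' : (d:ℝ) ≤ m - 1 := by
    have : (d:ℝ) + 1 ≤ m := by exact_mod_cast hdm
    linarith
  have hlow : Real.pi / m ≤ Real.pi * d / m := by
    rw [div_le_div_iff₀ hm hm]
    nlinarith [mul_nonneg (mul_nonneg (sub_nonneg.mpr hd) hπ.le) hm.le]
  rcases le_or_gt (Real.pi * d / m) (Real.pi / 2) with h | h
  · exact mysin_ge h2 hlow h
  · rw [← Real.sin_pi_sub]
    apply mysin_ge h2
    · rw [le_sub_iff_add_le, ← add_div, div_le_iff₀ hm]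
      nlinarith
    · linarith

lemma mysep {m : ℕ} (h2 : 2 ≤ m) {k l : ℕ} (hl : l < m) (hkl : k < l) :
    4 / m ≤ ‖(Circle.exp (2*Real.pi*k/m) : ℂ) - Circle.exp (2*Real.pi*l/m)‖ := by
  have hm : (0:ℝ) < m := by positivity
  have key : ((Circle.exp (2*Real.pi*k/m) : ℂ) - Circle.exp (2*Real.pi*l/m))
      = Complex.exp ((2*Real.pi*k/m : ℝ) * Complex.I)
        * (1 - Complex.exp (((2*Real.pi*l/m - 2*Real.pi*k/m : ℝ)) * Complex.I)) := by
    simp only [Circle.coe_exp]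
    rw [mul_sub, mul_one, ← Complex.exp_add]
    push_cast
    ring_nf
  rw [key, norm_mul, Complex.norm_exp_ofReal_mul_I, one_mul, norm_sub_rev,
    myabs_exp_sub_one]
  have harg : (2*Real.pi*l/m - 2*Real.pi*k/m) / 2 = Real.pi * ((l - k : ℕ) : ℝ) / m := by
    have : ((l - k : ℕ) : ℝ) = (l:ℝ) - k := by
      push_cast [Nat.cast_sub hkl.le]; ring
    rw [this]; ring
  rw [harg]
  have := mysin_ge' h2 (by omega : 1 ≤ l - k) (by omega : l - k < m)
  calc 4 / (m:ℝ) = 2 * (2 / m) := by ring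
    _ ≤ 2 * Real.sin (Real.pi * ((l-k:ℕ):ℝ) / m) := by linarith
    _ ≤ 2 * |Real.sin (Real.pi * ((l-k:ℕ):ℝ) / m)| := by
        have := le_abs_self (Real.sin (Real.pi * ((l-k:ℕ):ℝ) / m)); linarith

lemma myarc (τ : Measure Circle) [τ.IsHaarMeasure] [IsProbabilityMeasure τ] {ε : ℝ}
    (hε : 0 < ε) (hε1 : ε < 1) :
    τ {w : Circle | ‖1 - (w:ℂ)‖ ≤ ε} ≤ ENNReal.ofReal ε := by
  set s := {w : Circle | ‖1 - (w:ℂ)‖ ≤ ε} with hsdef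
  have hsm : MeasurableSet s := by
    have : IsClosed s := isClosed_le (continuous_norm.comp (continuous_const.sub continuous_subtype_val)) continuous_const
    exact this.measurableSet
  set m := ⌈1/ε⌉₊ with hmdef
  have hinv : (1:ℝ) < 1/ε := (one_lt_one_div hε hε1)
  have hm1 : 1 < m := Nat.lt_ceil.mpr (by exact_mod_cast hinv)
  have hmr : 1/ε ≤ (m:ℝ) := Nat.le_ceil _
  have hmr2 : (m:ℝ) < 2/ε := by
    have := Nat.ceil_lt_add_one (le_of_lt (by positivity : (0:ℝ) < 1/ε))
    have h2 : 1/ε + 1 < 2/ε := by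
      rw [div_add' _ _ _ hε.ne', div_lt_div_iff₀ hε hε]
      nlinarith
    calc (m:ℝ) < 1/ε + 1 := this
      _ < 2/ε := h2
  have hm0 : (0:ℝ) < m := by positivity
  set z : ℕ → Circle := fun k => Circle.exp (2*Real.pi*k/m) with hz
  have hdisj2 : ∀ k l : ℕ, k < m → l < m → k < l → Disjoint (z k • s) (z l • s) := by
    intro k l hk hl hkl
    rw [Set.disjoint_left]
    intro w hwk hwl
    rw [Set.mem_smul_set_iff_inv_smul_mem] at hwk hwl
    have hk' : ‖(1:ℂ) - ((z k)⁻¹ * w : Circle)‖ ≤ ε := hwk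
    have hl' : ‖(1:ℂ) - ((z l)⁻¹ * w : Circle)‖ ≤ ε := hwl
    have hsep := mysep (by omega : 2 ≤ m) hl hkl
    have hid : ((z k : ℂ)) - (z l : ℂ)
        = (z k : ℂ) * (1 - ((z k)⁻¹ * w : Circle)) - (z l : ℂ) * (1 - ((z l)⁻¹ * w : Circle)) := by
      push_cast
      field_simp
      ring
    have habs : ‖(z k : ℂ) - (z l : ℂ)‖ ≤ 2 * ε := by
      rw [hid]
      calc ‖_‖ ≤ ‖(z k : ℂ) * (1 - ((z k)⁻¹ * w : Circle))‖
            + ‖(z l : ℂ) * (1 - ((z l)⁻¹ * w : Circle))‖ := by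
            apply norm_sub_le
        _ ≤ ε + ε := by
            rw [norm_mul, norm_mul]
            have a1 : ‖(z k : ℂ)‖ = 1 := Circle.norm_coe _
            have a2 : ‖(z l : ℂ)‖ = 1 := Circle.norm_coe _
            rw [a1, a2, one_mul, one_mul]
            exact add_le_add hk' hl'
        _ = 2 * ε := by ring
    have hcontr : 4 / (m:ℝ) ≤ 2 * ε := le_trans hsep habs
    have hme : (m:ℝ) * ε < 2 := (lt_div_iff₀ hε).mp hmr2
    have : (2:ℝ) * ε < 4 / m := by
      rw [lt_div_iff₀ hm0]; nlinarith
    linarith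
  have hkm : ∀ k, MeasurableSet (z k • s) := by
    intro k
    have he : z k • s = (fun w => (z k)⁻¹ * w) ⁻¹' s := by
      ext w; simp [Set.mem_smul_set_iff_inv_smul_mem]
    rw [he]
    exact hsm.preimage (measurable_const_mul _)
  have hτk : ∀ k, τ (z k • s) = τ s := fun k => measure_smul (μ := τ) (G := Circle) (z k) s
  have hpd : (↑(Finset.range m) : Set ℕ).PairwiseDisjoint (fun k => z k • s) := by
    intro k hk l hl hne
    simp only [Finset.coe_range, Set.mem_Iio] at hk hl
    rcases lt_or_gt_of_ne hne with h | h
    · exact hdisj2 k l hk hl h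
    · exact (hdisj2 l k hl hk h).symm
  have hsum := measure_biUnion_finset (μ := τ) hpd (fun k _ => hkm k)
  have hle1 : (m : ℝ≥0∞) * τ s ≤ 1 := by
    calc (m : ℝ≥0∞) * τ s = ∑ k ∈ Finset.range m, τ (z k • s) := by
          simp [hτk, Finset.sum_const, mul_comm]
      _ = τ (⋃ k ∈ Finset.range m, z k • s) := hsum.symm
      _ ≤ τ Set.univ := measure_mono (Set.subset_univ _)
      _ = 1 := measure_univ
  have hτs : τ s ≤ (m : ℝ≥0∞)⁻¹ := by
    rw [ENNReal.le_inv_iff_mul_le, mul_comm]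
    exact hle1
  refine le_trans hτs ?_
  rw [← ENNReal.ofReal_natCast m, ← ENNReal.ofReal_inv_of_pos hm0]
  apply ENNReal.ofReal_le_ofReal
  rw [inv_le_comm₀ hm0 hε, ← one_div]
  exact hmr

lemma myD (τ : Measure Circle) [τ.IsHaarMeasure] [IsProbabilityMeasure τ] (n : ℕ) (hn : 1 ≤ n) :
    τ {z : Circle | ∃ j, 1 ≤ j ∧ j ≤ n^2 ∧
        ‖1 - (z:ℂ)^j‖ ≤ (n:ℝ)^4 / 2^(n-1)}
      ≤ ENNReal.ofReal ((n:ℝ)^6 / 2^(n-1)) := by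
  set ε := (n:ℝ)^4 / 2^(n-1) with hεdef
  have hε0 : 0 < ε := by positivity
  have hn1 : (1:ℝ) ≤ n := by exact_mod_cast hn
  rcases lt_or_ge ε 1 with hε1 | hε1
  · have hsub : {z : Circle | ∃ j, 1 ≤ j ∧ j ≤ n^2 ∧ ‖1 - (z:ℂ)^j‖ ≤ ε}
        ⊆ ⋃ j ∈ Finset.Icc 1 (n^2), (fun z : Circle => z ^ j) ⁻¹'
            {w : Circle | ‖1 - (w:ℂ)‖ ≤ ε} := by
      rintro z ⟨j, hj1, hj2, hj⟩
      refine Set.mem_biUnion (Finset.mem_Icc.mpr ⟨hj1, hj2⟩) ?_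
      simpa using hj
    have hcl : IsClosed {w : Circle | ‖1 - (w:ℂ)‖ ≤ ε} :=
      isClosed_le (continuous_norm.comp
        (continuous_const.sub continuous_subtype_val)) continuous_const
    have hsm : MeasurableSet {w : Circle | ‖1 - (w:ℂ)‖ ≤ ε} := hcl.measurableSet
    calc τ _ ≤ τ (⋃ j ∈ Finset.Icc 1 (n^2), (fun z : Circle => z ^ j) ⁻¹'
            {w : Circle | ‖1 - (w:ℂ)‖ ≤ ε}) := measure_mono hsub
      _ ≤ ∑ j ∈ Finset.Icc 1 (n^2), τ ((fun z : Circle => z ^ j) ⁻¹'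
            {w : Circle | ‖1 - (w:ℂ)‖ ≤ ε}) := measure_biUnion_finset_le _ _
      _ ≤ ∑ j ∈ Finset.Icc 1 (n^2), ENNReal.ofReal ε := by
          apply Finset.sum_le_sum
          intro j hj
          rw [(mypow_preserving τ (Finset.mem_Icc.mp hj).1).measure_preimage
            hsm.nullMeasurableSet]
          exact myarc τ hε0 hε1
      _ ≤ ENNReal.ofReal ((n:ℝ)^6 / 2^(n-1)) := by
          rw [Finset.sum_const, Nat.card_Icc]
          have : (n^2 + 1 - 1) = n^2 := by omega
          rw [this, nsmul_eq_mul, ← ENNReal.ofReal_natCast (n^2),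
            ← ENNReal.ofReal_mul (by positivity)]
          apply ENNReal.ofReal_le_ofReal
          push_cast
          rw [hεdef]
          apply le_of_eq
          field_simp
  · calc τ _ ≤ 1 := prob_le_one
      _ ≤ ENNReal.ofReal ((n:ℝ)^6 / 2^(n-1)) := by
          rw [← ENNReal.ofReal_one]
          apply ENNReal.ofReal_le_ofReal
          calc (1:ℝ) ≤ ε := hε1
            _ ≤ (n:ℝ)^6 / 2^(n-1) := by
              rw [hεdef, div_le_div_iff₀ (by positivity) (by positivity)]
              nlinarith [pow_pos (by norm_num : (0:ℝ) < 2) (n-1),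
                pow_le_pow_right₀ hn1 (by omega : 4 ≤ 6)]

instance : Filter.NeBot (nhdsWithin (1 : Circle) {(1:Circle)}ᶜ) := by
  have hne : Filter.NeBot (nhdsWithin (0:ℝ) (Set.Ioo 0 1)) := by
    apply mem_closure_iff_nhdsWithin_neBot.1
    rw [closure_Ioo one_ne_zero.symm]
    exact ⟨le_refl 0, by norm_num⟩
  have ht : Tendsto Circle.exp (nhdsWithin (0:ℝ) (Set.Ioo 0 1))
      (nhdsWithin (1 : Circle) {(1:Circle)}ᶜ) := by
    rw [tendsto_nhdsWithin_iff]
    constructor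
    · have := (Circle.exp.continuous.tendsto 0)
      rw [Circle.exp_zero] at this
      exact this.mono_left nhdsWithin_le_nhds
    · filter_upwards [self_mem_nhdsWithin] with x hx
      simp only [Set.mem_compl_iff, Set.mem_singleton_iff]
      rw [Circle.exp_eq_one]
      rintro ⟨n, rfl⟩
      rcases lt_trichotomy n 0 with h | rfl | h
      · nlinarith [hx.1, Real.pi_pos, (by exact_mod_cast h : (n:ℝ) < 0)]
      · simpa using hx.1
      · have h1 : (1:ℝ) ≤ n := by exact_mod_cast h
        nlinarith [hx.2, Real.pi_gt_three]
  exact (hne.map _).mono ht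

lemma myroots_countable : Set.Countable {z : Circle | ∃ j : ℕ, 1 ≤ j ∧ z ^ j = 1} := by
  have hsub : {z : Circle | ∃ j : ℕ, 1 ≤ j ∧ z ^ j = 1}
      ⊆ ⋃ j : ℕ, {z : Circle | z ^ (j+1) = 1} := by
    rintro z ⟨j, hj1, hj⟩
    exact Set.mem_iUnion.mpr ⟨j - 1, by rwa [Nat.sub_add_cancel hj1]⟩
  refine Set.Countable.mono hsub (Set.countable_iUnion fun j => Set.Finite.countable ?_)
  have hfin : Set.Finite {x : ℂ | x ^ (j+1) = 1} := by
    have h0 : (Polynomial.X ^ (j+1) - Polynomial.C 1 : Polynomial ℂ) ≠ 0 :=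
      Polynomial.X_pow_sub_C_ne_zero (by omega) 1
    have := Polynomial.finite_setOf_isRoot h0
    refine this.subset ?_
    intro x hx
    simp only [Set.mem_setOf_eq, Polynomial.IsRoot, Polynomial.eval_sub, Polynomial.eval_pow,
      Polynomial.eval_X, Polynomial.eval_C]
    rw [Set.mem_setOf_eq] at hx
    rw [hx]; ring
  apply Set.Finite.of_finite_image (f := fun z : Circle => (z : ℂ))
  · refine hfin.subset ?_
    rintro x ⟨z, hz, rfl⟩
    rw [Set.mem_setOf_eq] at hz ⊢
    have h2 : ((z ^ (j+1) : Circle) : ℂ) = ((1 : Circle) : ℂ) := congrArg _ hz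
    push_cast at h2
    exact h2
  · exact fun a _ b _ h => Subtype.ext h

lemma mysummable : (∑' n : ℕ, ENNReal.ofReal ((n:ℝ)^6 / 2^(n-1))) ≠ ⊤ := by
  have hs : Summable (fun n : ℕ => (n:ℝ)^6 / 2^(n-1)) := by
    have h2 : Summable (fun n : ℕ => (n:ℝ)^6 * (1/2:ℝ)^n) :=
      summable_pow_mul_geometric_of_norm_lt_one 6 (by norm_num : ‖(1/2:ℝ)‖ < 1)
    apply Summable.of_nonneg_of_le (fun n => by positivity) ?_ (h2.mul_left 2)
    intro n
    rcases Nat.eq_zero_or_pos n with rfl | hn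
    · simp
    · have : (2:ℝ)^(n-1) = 2^n / 2 := by
        rw [eq_div_iff (by norm_num : (2:ℝ) ≠ 0), ← pow_succ]
        congr 1; omega
      rw [this]
      rw [div_div_eq_mul_div, div_le_iff₀ (by positivity)]
      have : (1/2:ℝ)^n = 1/2^n := by rw [div_pow]; norm_num
      rw [this]
      field_simp
      apply le_of_eq; ring
  rw [← ENNReal.ofReal_tsum_of_nonneg (fun n => by positivity) hs]
  exact ENNReal.ofReal_ne_top

theorem stmt_10 (τ : Measure Circle) [τ.IsHaarMeasure] [IsProbabilityMeasure τ] :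
    ∀ᵐ z : Circle ∂τ, ∃ N : ℕ, 1 ≤ N ∧ ∀ n : ℕ, 1 ≤ n → ∀ j : ℕ, 1 ≤ j → j ≤ n ^ 2 →
      (n : ℝ) ^ 4 / (N * 2 ^ (n - 1)) < ‖1 - (z : ℂ) ^ j‖ := by
  set D : ℕ → Set Circle := fun n => {z : Circle | ∃ j, 1 ≤ j ∧ j ≤ n^2 ∧
      ‖1 - (z:ℂ)^j‖ ≤ (n:ℝ)^4 / 2^(n-1)} with hD
  have hlimsup : τ (Filter.limsup D atTop) = 0 := by
    apply measure_limsup_atTop_eq_zero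
    apply ne_top_of_le_ne_top mysummable
    apply ENNReal.tsum_le_tsum
    intro n
    rcases Nat.eq_zero_or_pos n with rfl | hn
    · have h0 : D 0 = ∅ := by
        ext z
        simp only [hD, Set.mem_setOf_eq, Set.mem_empty_iff_false, iff_false]
        rintro ⟨j, h1, h2, -⟩
        omega
      simp [h0]
    · exact myD τ n hn
  have hroots : τ {z : Circle | ∃ j : ℕ, 1 ≤ j ∧ z ^ j = 1} = 0 :=
    myroots_countable.measure_zero τ
  have h1 : ∀ᵐ z ∂τ, z ∉ Filter.limsup D atTop := measure_eq_zero_iff_ae_notMem.mp hlimsup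
  have h2 : ∀ᵐ z ∂τ, z ∉ {z : Circle | ∃ j : ℕ, 1 ≤ j ∧ z ^ j = 1} :=
    measure_eq_zero_iff_ae_notMem.mp hroots
  filter_upwards [h1, h2] with z hz1 hz2
  rw [mem_limsup_iff_frequently_mem, Filter.not_frequently] at hz1
  obtain ⟨n₀, hn₀⟩ := Filter.eventually_atTop.mp hz1
  set n₁ := max n₀ 1 with hn₁
  have hn₁1 : 1 ≤ n₁ := le_max_right _ _
  have hne : (Finset.Icc 1 (n₁^2)).Nonempty := ⟨1, Finset.mem_Icc.mpr ⟨le_refl 1, by nlinarith⟩⟩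
  set δ := (Finset.Icc 1 (n₁^2)).inf' hne (fun j => ‖1 - (z:ℂ)^j‖) with hδ
  have hδpos : 0 < δ := by
    rw [hδ, Finset.lt_inf'_iff]
    intro j hj
    have hzj : (z:ℂ)^j ≠ 1 := by
      intro h
      apply hz2
      exact ⟨j, (Finset.mem_Icc.mp hj).1, Subtype.ext (by push_cast; exact h)⟩
    have : (1:ℂ) - (z:ℂ)^j ≠ 0 := sub_ne_zero.mpr (Ne.symm hzj)
    exact norm_pos_iff.mpr this
  obtain ⟨N₀, hN₀⟩ := exists_nat_gt ((n₁:ℝ)^4 / δ)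
  refine ⟨max N₀ 1, le_max_right _ _, ?_⟩
  intro n hn j hj1 hj2
  set N := max N₀ 1 with hN
  have hNr : (1:ℝ) ≤ (N:ℝ) := by exact_mod_cast le_max_right N₀ 1
  have hNpos : (0:ℝ) < (N:ℝ) := by linarith
  have h2p : (1:ℝ) ≤ 2^(n-1) := by apply one_le_pow₀; norm_num
  by_cases hcase : n₀ ≤ n
  · have hzD := hn₀ n hcase
    have hgt : (n:ℝ)^4/2^(n-1) < ‖1 - (z:ℂ)^j‖ := by
      by_contra h
      push_neg at h
      exact hzD ⟨j, hj1, hj2, h⟩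
    calc (n:ℝ)^4 / (N * 2^(n-1)) ≤ (n:ℝ)^4 / (1 * 2^(n-1)) := by
          gcongr
      _ = (n:ℝ)^4 / 2^(n-1) := by rw [one_mul]
      _ < _ := hgt
  · push_neg at hcase
    have hn_le : n ≤ n₁ := le_trans hcase.le (le_max_left _ _)
    have hn_le' : (n:ℝ) ≤ n₁ := by exact_mod_cast hn_le
    have hj2' : j ≤ n₁^2 := le_trans hj2 (Nat.pow_le_pow_left hn_le 2)
    have hδle : δ ≤ ‖1 - (z:ℂ)^j‖ :=
      Finset.inf'_le _ (Finset.mem_Icc.mpr ⟨hj1, hj2'⟩)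
    have hNN : (N₀:ℝ) ≤ N := by exact_mod_cast le_max_left N₀ 1
    have hstep : (n₁:ℝ)^4 / N < δ := by
      rw [div_lt_iff₀ hNpos]
      have : (n₁:ℝ)^4 / δ < N := lt_of_lt_of_le hN₀ hNN
      rw [div_lt_iff₀ hδpos] at this
      linarith [this, mul_comm δ (N:ℝ)]
    calc (n:ℝ)^4 / (N * 2^(n-1)) ≤ (n₁:ℝ)^4 / (N * 1) := by
          gcongr
      _ = (n₁:ℝ)^4 / N := by rw [mul_one]
      _ < δ := hstep
      _ ≤ _ := hδle
end

section
/- If θ is irrational and badly approximable, then e^{2πiθ} lies in the set E, i.e., there exist d > 0 and N ∈ ℕ such that min_{1 ≤ j ≤ n²} |1 - e^{2πiθ j}| > n⁴/(N·2^{n-1}) for all n ∈ ℕ. -/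
lemma aux_pow6 : ∀ n : ℕ, n ^ 6 ≤ 2 ^ (n + 11) := by
  intro n
  induction n with
  | zero => norm_num
  | succ k ih =>
    rcases le_or_gt k 8 with h | h
    · interval_cases k <;> norm_num
    · have h9 : (9 : ℕ) ≤ k := h
      have hk5 : 9 * k ^ 5 ≤ k ^ 6 := by
        calc 9 * k ^ 5 ≤ k * k ^ 5 := Nat.mul_le_mul_right _ h9
          _ = k ^ 6 := by ring
      have hk4 : 9 * k ^ 4 ≤ k ^ 5 := by
        calc 9 * k ^ 4 ≤ k * k ^ 4 := Nat.mul_le_mul_right _ h9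
          _ = k ^ 5 := by ring
      have hk3 : 9 * k ^ 3 ≤ k ^ 4 := by
        calc 9 * k ^ 3 ≤ k * k ^ 3 := Nat.mul_le_mul_right _ h9
          _ = k ^ 4 := by ring
      have hk2 : 9 * k ^ 2 ≤ k ^ 3 := by
        calc 9 * k ^ 2 ≤ k * k ^ 2 := Nat.mul_le_mul_right _ h9
          _ = k ^ 3 := by ring
      have hk1 : 9 * k ≤ k ^ 2 := by
        calc 9 * k ≤ k * k := Nat.mul_le_mul_right _ h9
          _ = k ^ 2 := by ring
      have h1 : (k + 1) ^ 6 ≤ 2 * k ^ 6 := by nlinarith [hk5, hk4, hk3, hk2, hk1, h9]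
      calc (k + 1) ^ 6 ≤ 2 * k ^ 6 := h1
        _ ≤ 2 * 2 ^ (k + 11) := by omega
        _ = 2 ^ (k + 1 + 11) := by ring

lemma aux_abs_one_sub_exp (y : ℝ) :
    ‖1 - Complex.exp (y * Complex.I)‖ = 2 * |Real.sin (y / 2)| := by
  rw [Complex.exp_mul_I]
  have h1 : (1 : ℂ) - (Complex.cos y + Complex.sin y * Complex.I)
      = Complex.ofReal (1 - Real.cos y) + Complex.ofReal (-Real.sin y) * Complex.I := by
    push_cast; ring
  rw [h1, Complex.norm_def, Complex.normSq_add_mul_I]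
  have h2 : (1 - Real.cos y) ^ 2 + (-Real.sin y) ^ 2 = (2 * |Real.sin (y / 2)|) ^ 2 := by
    have hc : Real.cos y = 2 * Real.cos (y / 2) ^ 2 - 1 := by
      have := Real.cos_two_mul (y / 2)
      rwa [show (2 : ℝ) * (y / 2) = y from by ring] at this
    have hs : Real.sin y = 2 * Real.sin (y / 2) * Real.cos (y / 2) := by
      have := Real.sin_two_mul (y / 2)
      rwa [show (2 : ℝ) * (y / 2) = y from by ring] at this
    have hp := Real.sin_sq_add_cos_sq (y / 2)
    rw [hc, hs, mul_pow, sq_abs]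
    linear_combination (4 * (Real.cos (y / 2) ^ 2 - 1)) * hp
  rw [h2, Real.sqrt_sq (by positivity)]

theorem stmt_12 (θ : ℝ) (hθI : θ ∈ Set.Ioo (0 : ℝ) 1) (hθ : Irrational θ)
    (hbad : ∃ d : ℝ, 0 < d ∧ ∀ m : ℕ, 1 ≤ m → ∀ l : ℤ, d / m < |(m : ℝ) * θ - (l : ℝ)|) :
    ∃ N : ℕ, 1 ≤ N ∧ ∀ n : ℕ, 1 ≤ n → ∀ j : ℕ, 1 ≤ j → j ≤ n ^ 2 →
      (n : ℝ) ^ 4 / (N * 2 ^ (n - 1)) <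
        ‖1 - Complex.exp (2 * Real.pi * Complex.I * θ) ^ j‖ := by
  obtain ⟨d, hd, hb⟩ := hbad
  refine ⟨⌈1024 / d⌉₊ + 1, le_add_self, ?_⟩
  intro n hn j hj hjn
  set N : ℕ := ⌈1024 / d⌉₊ + 1 with hN
  have hNd : 1024 / d ≤ (N : ℝ) := by
    calc 1024 / d ≤ (⌈1024 / d⌉₊ : ℝ) := Nat.le_ceil _
      _ ≤ N := by exact_mod_cast Nat.le_succ _
  -- rewrite the complex quantity
  have hexp : Complex.exp (2 * Real.pi * Complex.I * θ) ^ j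
      = Complex.exp ((2 * Real.pi * θ * j : ℝ) * Complex.I) := by
    rw [← Complex.exp_nat_mul]
    push_cast
    ring_nf
  have habs : ‖1 - Complex.exp (2 * Real.pi * Complex.I * θ) ^ j‖
      = 2 * |Real.sin (Real.pi * θ * j)| := by
    rw [hexp, aux_abs_one_sub_exp]
    congr 2
    ring
  -- lower bound on the sine
  set l : ℤ := round ((j : ℝ) * θ) with hl
  set r : ℝ := (j : ℝ) * θ - l with hr
  have hr2 : |r| ≤ 1 / 2 := abs_sub_round _
  have hrd : d / j < |r| := hb j hj l
  have hsin : |Real.sin (Real.pi * θ * j)| = |Real.sin (Real.pi * r)| := by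
    have : Real.pi * θ * j = Real.pi * r + l * Real.pi := by
      rw [hr]; ring
    rw [this, Real.sin_add_int_mul_pi, abs_mul]
    rcases Int.even_or_odd l with he | ho
    · rw [he.neg_one_zpow]; simp
    · rw [Odd.neg_one_zpow ho]; simp
  have hsin2 : 2 * |r| ≤ |Real.sin (Real.pi * r)| := by
    have h0 : |Real.sin (Real.pi * r)| = Real.sin (Real.pi * |r|) := by
      rcases abs_cases r with ⟨h, _⟩ | ⟨h, hneg⟩
      · rw [h, abs_of_nonneg]
        apply Real.sin_nonneg_of_nonneg_of_le_pi
        · positivity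
        · nlinarith [Real.pi_pos, hr2, abs_nonneg r]
      · rw [h]
        have : Real.pi * r = -(Real.pi * -r) := by ring
        rw [this, Real.sin_neg, abs_neg, abs_of_nonneg]
        apply Real.sin_nonneg_of_nonneg_of_le_pi
        · nlinarith [Real.pi_pos]
        · nlinarith [Real.pi_pos, hr2, abs_nonneg r]
    rw [h0]
    have := Real.mul_le_sin (x := Real.pi * |r|) (by positivity)
      (by nlinarith [Real.pi_pos, hr2])
    calc 2 * |r| = 2 / Real.pi * (Real.pi * |r|) := by
          field_simp
      _ ≤ Real.sin (Real.pi * |r|) := this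
  -- combine
  have hjpos : (0 : ℝ) < j := by exact_mod_cast hj
  have hnpos : (0 : ℝ) < n := by exact_mod_cast hn
  have hchain : 4 * d / (n : ℝ) ^ 2 < ‖1 - Complex.exp (2 * Real.pi * Complex.I * θ) ^ j‖ := by
    rw [habs, hsin]
    have h1 : 4 * d / (n : ℝ) ^ 2 ≤ 4 * d / j := by
      apply div_le_div_of_nonneg_left (by linarith) hjpos
      exact_mod_cast hjn
    have h2 : 4 * d / j < 4 * |r| := by
      have : d / j < |r| := hrd
      calc 4 * d / j = 4 * (d / j) := by ring
        _ < 4 * |r| := by linarith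
    have h3 : 4 * |r| ≤ 2 * |Real.sin (Real.pi * r)| := by linarith
    linarith
  refine lt_of_le_of_lt ?_ hchain
  -- n^4 / (N * 2^(n-1)) ≤ 4d / n^2  ⟺  n^6 ≤ 4dN·2^(n-1)
  have hp6 : (n : ℝ) ^ 6 ≤ 4096 * 2 ^ (n - 1) := by
    have h := aux_pow6 n
    have heq : n + 11 = (n - 1) + 12 := by omega
    have : (n : ℝ) ^ 6 ≤ (2 : ℝ) ^ (n + 11) := by exact_mod_cast h
    rw [heq, pow_add] at this
    calc (n : ℝ) ^ 6 ≤ (2 : ℝ) ^ (n - 1) * 2 ^ 12 := this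
      _ = 4096 * 2 ^ (n - 1) := by norm_num; ring
  have hNpos : (0 : ℝ) < N := by positivity
  have h2pos : (0 : ℝ) < 2 ^ (n - 1) := by positivity
  rw [div_le_div_iff₀ (by positivity) (by positivity)]
  have hdN : 4096 ≤ 4 * d * N := by
    have : 1024 ≤ d * N := by
      have := (div_le_iff₀ hd).mp hNd
      linarith [mul_comm d (N : ℝ) ▸ this]
    linarith
  calc (n : ℝ) ^ 4 * (n : ℝ) ^ 2 = (n : ℝ) ^ 6 := by ring
    _ ≤ 4096 * 2 ^ (n - 1) := hp6
    _ ≤ (4 * d * N) * 2 ^ (n - 1) := by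
        apply mul_le_mul_of_nonneg_right hdN (le_of_lt h2pos)
    _ = 4 * d * ((N : ℝ) * 2 ^ (n - 1)) := by ring
end

section
/- Let θ be irrational with convergents p_n/q_n. Then for all n ≥ 1, |θ q_n - p_n| / |θ q_{n+1} - p_{n+1}| > q_{n+2}/(q_n + q_{n+1}) ≥ max(a_{n+2}/2, 1), where a_{n+2} is the (n+2)-nd partial quotient. -/
theorem stmt_14 (θ : ℝ) (hθ : Irrational θ)
    (Θ : ℕ → ℝ) (a p q : ℕ → ℤ)
    (hΘ0 : Θ 0 = θ)
    (ha : ∀ k, a k = ⌊Θ k⌋)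
    (hΘ : ∀ k, Θ (k + 1) = 1 / (Θ k - a k))
    (hp0 : p 0 = 1) (hp1 : p 1 = a 0)
    (hq0 : q 0 = 0) (hq1 : q 1 = 1)
    (hp : ∀ k, p (k + 2) = a (k + 1) * p (k + 1) + p k)
    (hq : ∀ k, q (k + 2) = a (k + 1) * q (k + 1) + q k) :
    ∀ n : ℕ, 1 ≤ n →
      |θ * (q n : ℝ) - (p n : ℝ)| / |θ * (q (n + 1) : ℝ) - (p (n + 1) : ℝ)| >
        (q (n + 2) : ℝ) / ((q n : ℝ) + (q (n + 1) : ℝ)) ∧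
      (q (n + 2) : ℝ) / ((q n : ℝ) + (q (n + 1) : ℝ)) ≥ max ((a (n + 1) : ℝ) / 2) 1 := by
  -- Θ k is irrational for all k
  have hΘirr : ∀ k, Irrational (Θ k) := by
    intro k
    induction k with
    | zero => rwa [hΘ0]
    | succ k ih =>
      rw [hΘ k, ha k, one_div]
      exact (ih.sub_intCast _).inv
  -- Θ (k+1) > 1
  have hΘgt1 : ∀ k, 1 < Θ (k + 1) := by
    intro k
    have h1 : 0 < Int.fract (Θ k) := by
      rw [Int.fract_pos]
      exact fun h => (hΘirr k).ne_int _ h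
    have h2 : Int.fract (Θ k) < 1 := Int.fract_lt_one _
    rw [hΘ k, ha k, Int.self_sub_floor, one_div]
    exact (one_lt_inv₀ h1).2 h2
  -- a (k+1) ≥ 1
  have hage1 : ∀ k, (1 : ℝ) ≤ (a (k + 1) : ℝ) := by
    intro k
    have : (1 : ℤ) ≤ a (k + 1) := by
      rw [ha]
      exact Int.le_floor.2 (by exact_mod_cast (hΘgt1 k).le)
    exact_mod_cast this
  -- a < Θ
  have haΘ : ∀ k, (a (k + 1) : ℝ) < Θ (k + 1) := by
    intro k
    rw [ha]
    exact lt_of_le_of_ne (Int.floor_le _) (((hΘirr (k + 1)).ne_int _).symm)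
  -- q bounds : for n ≥ 1, 1 ≤ q n and q n ≤ q (n+1)
  have hqb : ∀ n, (1 : ℝ) ≤ (q (n + 1) : ℝ) ∧ (q (n + 1) : ℝ) ≤ (q (n + 2) : ℝ) := by
    intro n
    induction n with
    | zero =>
      constructor
      · rw [hq1]; norm_num
      · rw [hq 0, hq0, hq1]
        push_cast
        have := hage1 0
        nlinarith
    | succ k ih =>
      obtain ⟨ih1, ih2⟩ := ih
      have h1 : (1 : ℝ) ≤ (q (k + 2) : ℝ) := le_trans ih1 ih2
      constructor
      · exact h1
      · rw [hq (k + 1)]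
        push_cast
        have := hage1 (k + 1)
        nlinarith
  -- key identity: e_{k+1} * Θ_{k+1} = - e_k
  have hE : ∀ k, (θ * (q (k + 1) : ℝ) - (p (k + 1) : ℝ)) * Θ (k + 1)
      = -(θ * (q k : ℝ) - (p k : ℝ)) := by
    intro k
    induction k with
    | zero =>
      rw [hq1, hq0, hp1, hp0, hΘ 0, hΘ0, ha 0, hΘ0]
      have hne : θ - ((⌊θ⌋ : ℤ) : ℝ) ≠ 0 := sub_ne_zero.2 (hθ.ne_int _)
      push_cast
      field_simp
      ring
    | succ k ih =>
      have hne : Θ (k + 1) - ((a (k + 1) : ℤ) : ℝ) ≠ 0 := by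
        rw [ha]
        exact sub_ne_zero.2 ((hΘirr (k + 1)).ne_int _)
      have hΘ2 : Θ (k + 2) = 1 / (Θ (k + 1) - (a (k + 1) : ℝ)) := hΘ (k + 1)
      rw [hq k, hp k, hΘ2]
      push_cast
      field_simp
      nlinarith [ih]
  -- e_k ≠ 0
  have hne0 : ∀ k, θ * (q k : ℝ) - (p k : ℝ) ≠ 0 := by
    intro k
    induction k with
    | zero =>
      rw [hq0, hp0]; push_cast; norm_num
    | succ k ih =>
      intro h
      apply ih
      have := hE k
      rw [h, zero_mul] at this
      linarith
  intro n hn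
  obtain ⟨m, rfl⟩ : ∃ m, n = m + 1 := ⟨n - 1, by omega⟩
  have hq1' : (1 : ℝ) ≤ (q (m + 1) : ℝ) := (hqb m).1
  have hq2' : (q (m + 1) : ℝ) ≤ (q (m + 2) : ℝ) := (hqb m).2
  have hden : (0 : ℝ) < (q (m + 1) : ℝ) + (q (m + 1 + 1) : ℝ) := by
    push_cast at hq2' ⊢
    linarith
  have hΘpos : (0 : ℝ) < Θ (m + 1 + 1) := lt_trans one_pos (hΘgt1 (m + 1))
  have hBne : |θ * (q (m + 1 + 1) : ℝ) - (p (m + 1 + 1) : ℝ)| ≠ 0 :=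
    abs_ne_zero.2 (hne0 (m + 1 + 1))
  have hdiv : |θ * (q (m + 1) : ℝ) - (p (m + 1) : ℝ)| /
      |θ * (q (m + 1 + 1) : ℝ) - (p (m + 1 + 1) : ℝ)| = Θ (m + 1 + 1) := by
    have h1 := hE (m + 1)
    have h2 : θ * (q (m + 1) : ℝ) - (p (m + 1) : ℝ)
        = -((θ * (q (m + 1 + 1) : ℝ) - (p (m + 1 + 1) : ℝ)) * Θ (m + 1 + 1)) := by
      linarith
    rw [h2, abs_neg, abs_mul, abs_of_pos hΘpos, mul_comm, mul_div_assoc,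
      div_self hBne, mul_one]
  have haux1 : (1 : ℝ) ≤ (a (m + 1 + 1) : ℝ) := hage1 (m + 1)
  have haux2 : (a (m + 1 + 1) : ℝ) < Θ (m + 1 + 1) := haΘ (m + 1)
  have hΘ1 : (1 : ℝ) < Θ (m + 1 + 1) := hΘgt1 (m + 1)
  have hqrec : (q (m + 1 + 2) : ℝ) = (a (m + 1 + 1) : ℝ) * (q (m + 1 + 1) : ℝ) + (q (m + 1) : ℝ) := by
    rw [hq (m + 1)]; push_cast; ring
  have hq2'' : (q (m + 1) : ℝ) ≤ (q (m + 1 + 1) : ℝ) := by push_cast at hq2' ⊢; linarith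
  constructor
  · rw [hdiv, gt_iff_lt, div_lt_iff₀ hden, hqrec]
    nlinarith
  · rw [ge_iff_le, max_le_iff]
    constructor
    · rw [div_le_div_iff₀ two_pos hden, hqrec]
      nlinarith
    · rw [le_div_iff₀ hden, hqrec]
      nlinarith
end

section
/- Let (a_k) and (b_k) be sequences of integers, λ on the unit circle, and suppose the series Σ_k |Arg λ^{a_k}| and Σ_k |Arg λ^{b_k}| converge, where Arg is the principal argument. If (y_k) is any integer sequence with Arg λ^{b_k} ≤ Arg λ^{y_k} ≤ Arg λ^{a_k} for all k, then the infinite product Π_k λ^{y_k} converges, and for every ε > 0 there is N such that |Arg Π_{k≥l} λ^{y_k}| < ε for all l > N. -/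
open Filter

private lemma zpow_finset_sum' (z : ℂ) (hz : z ≠ 0) (f : ℕ → ℤ) (s : Finset ℕ) :
    z ^ (∑ k ∈ s, f k) = ∏ k ∈ s, z ^ (f k) := by
  classical
  induction s using Finset.induction with
  | empty => simp
  | insert _ _ h ih => rw [Finset.sum_insert h, Finset.prod_insert h, zpow_add₀ hz, ih]

theorem stmt_18 (z : ℂ) (hz : ‖z‖ = 1) (a b y : ℕ → ℤ)
    (hsa : Summable fun k => |Complex.arg (z ^ (a k))|)
    (hsb : Summable fun k => |Complex.arg (z ^ (b k))|)
    (hsand : ∀ k, Complex.arg (z ^ (b k)) ≤ Complex.arg (z ^ (y k)) ∧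
      Complex.arg (z ^ (y k)) ≤ Complex.arg (z ^ (a k))) :
    (∃ L : ℂ, Tendsto (fun n => z ^ (∑ k ∈ Finset.range n, y k)) atTop (nhds L)) ∧
    ∀ ε : ℝ, 0 < ε → ∃ N : ℕ, ∀ l : ℕ, N < l →
      ∃ L : ℂ, Tendsto (fun n => z ^ (∑ k ∈ Finset.Ico l n, y k)) atTop (nhds L) ∧
        |Complex.arg L| < ε := by
  have hz0 : z ≠ 0 := by
    intro h; rw [h] at hz; simp at hz
  set θ : ℕ → ℝ := fun k => Complex.arg (z ^ (y k)) with hθdef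
  -- summability of |θ|
  have hbound : ∀ k, |θ k| ≤ |Complex.arg (z ^ (a k))| + |Complex.arg (z ^ (b k))| := by
    intro k
    rcases hsand k with ⟨h1, h2⟩
    rw [abs_le]
    constructor
    · have := neg_abs_le (Complex.arg (z ^ (b k)))
      nlinarith [abs_nonneg (Complex.arg (z ^ (a k)))]
    · have := le_abs_self (Complex.arg (z ^ (a k)))
      nlinarith [abs_nonneg (Complex.arg (z ^ (b k)))]
  have habs : Summable (fun k => |θ k|) :=
    Summable.of_nonneg_of_le (fun k => abs_nonneg _) hbound (hsa.add hsb)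
  have hθsum : Summable θ := habs.of_abs
  -- key identity
  have hzexp : ∀ k : ℤ, z ^ k = Complex.exp ((Complex.arg (z ^ k) : ℂ) * Complex.I) := by
    intro k
    have h1 : ‖z ^ k‖ = 1 := by
      rw [norm_zpow, hz, one_zpow]
    conv_lhs => rw [← Complex.norm_mul_exp_arg_mul_I (z ^ k)]
    rw [h1, Complex.ofReal_one, one_mul]
  have key : ∀ s : Finset ℕ, z ^ (∑ k ∈ s, y k) =
      Complex.exp (((∑ k ∈ s, θ k : ℝ) : ℂ) * Complex.I) := by
    intro s
    rw [zpow_finset_sum' z hz0 y s]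
    rw [Complex.ofReal_sum, Finset.sum_mul, Complex.exp_sum]
    exact Finset.prod_congr rfl fun k _ => hzexp (y k)
  -- partial sums
  set s : ℕ → ℝ := fun n => ∑ k ∈ Finset.range n, θ k with hsdef
  set S : ℝ := ∑' k, θ k with hSdef
  have hsS : Tendsto s atTop (nhds S) := hθsum.hasSum.tendsto_sum_nat
  have hcont : ∀ {u : ℕ → ℝ} {T : ℝ}, Tendsto u atTop (nhds T) →
      Tendsto (fun n => Complex.exp ((u n : ℂ) * Complex.I)) atTop
        (nhds (Complex.exp ((T : ℂ) * Complex.I))) := by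
    intro u T hu
    exact (Complex.continuous_exp.comp
      (Complex.continuous_ofReal.mul continuous_const)).continuousAt.tendsto.comp hu
  constructor
  · refine ⟨Complex.exp ((S : ℂ) * Complex.I), ?_⟩
    have := hcont hsS
    exact this.congr fun n => (key (Finset.range n)).symm
  · intro ε hε
    -- tail bound
    set A : ℝ := ∑' k, |θ k| with hAdef
    have hA : Tendsto (fun n => ∑ k ∈ Finset.range n, |θ k|) atTop (nhds A) :=
      habs.hasSum.tendsto_sum_nat
    obtain ⟨N, hN⟩ := (Metric.tendsto_atTop.1 hA) (min ε Real.pi) (lt_min hε Real.pi_pos)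
    refine ⟨N, fun l hl => ?_⟩
    -- T l = S - s l
    have htail : |S - s l| < min ε Real.pi := by
      have h1 : S - s l = ∑' k, θ (k + l) := by
        have := (Summable.sum_add_tsum_nat_add l hθsum)
        linarith [this]
      have h2 : |∑' k, θ (k + l)| ≤ ∑' k, |θ (k + l)| := by
        simpa using norm_tsum_le_tsum_norm (f := fun k => θ (k + l))
          (by exact habs.comp_injective (add_left_injective l))
      have h3 : ∑' k, |θ (k + l)| = A - ∑ k ∈ Finset.range l, |θ k| := by
        have := Summable.sum_add_tsum_nat_add l habs
        linarith [this]
      have h4 := hN l (le_of_lt hl)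
      rw [Real.dist_eq] at h4
      have h5 : ∑ k ∈ Finset.range l, |θ k| ≤ A :=
        Summable.sum_le_tsum (Finset.range l) (fun i _ => abs_nonneg _) habs
      rw [abs_sub_comm] at h4
      rw [abs_of_nonneg (by linarith)] at h4
      rw [h1]
      calc |∑' k, θ (k + l)| ≤ A - ∑ k ∈ Finset.range l, |θ k| := h2.trans_eq h3
        _ < min ε Real.pi := h4
    set T : ℝ := S - s l with hTdef
    refine ⟨Complex.exp ((T : ℂ) * Complex.I), ?_, ?_⟩
    · have hlim : Tendsto (fun n => s n - s l) atTop (nhds T) := hsS.sub_const (s l)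
      have heq : ∀ᶠ n in atTop, z ^ (∑ k ∈ Finset.Ico l n, y k) =
          Complex.exp (((s n - s l : ℝ) : ℂ) * Complex.I) := by
        filter_upwards [eventually_ge_atTop l] with n hn
        rw [key]
        congr 2
        push_cast
        rw [hsdef]
        simp only []
        rw [← Finset.sum_range_add_sum_Ico θ hn]
        push_cast
        ring
      exact Tendsto.congr' (heq.mono fun n h => h.symm) (hcont hlim)
    · have hT : T ∈ Set.Ioc (-Real.pi) Real.pi := by
        constructor
        · have := (abs_lt.1 (htail.trans_le (min_le_right _ _))).1
          linarith
        · exact le_of_lt (abs_lt.1 (htail.trans_le (min_le_right _ _))).2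
      rw [Complex.arg_exp_mul_I, (toIocMod_eq_self _).2 (by
        constructor
        · exact hT.1
        · have := hT.2; linarith)]
      exact htail.trans_le (min_le_left _ _)
end
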